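/- Let ϖ be uniform on {0,…,m−q} and let a_1,…,a_m be fixed reals with E(a) := (1/m)∑_{t=1}^m a_t. Then the bootstrap expectation of the (scaled) block average deviates from the full-sample average by edge effects: |(1/(q(m−q+1))) ∑_{t=0}^{m−q} ∑_{q'=1}^q a_{t+q'} − (1/m)∑_{t=1}^m a_t| ≤ (2q/m) · max_{1≤t≤m} |a_t|, for 1 ≤ q ≤ m/2. -/

import Mathlib

lemma mbb_gauss (k : ℕ) : ∑ s ∈ Finset.Icc 1 k, (s : ℝ) = k * (k + 1) / 2 := by
  induction k with
  | zero => simp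
  | succ n ih =>
    rw [Finset.sum_Icc_succ_top (by omega)] at *
    rw [ih]; push_cast; ring

lemma mbb_tv_half (m : ℕ) (A B : ℝ) (hB : 0 < B) (hA : 0 ≤ A) :
    ∑ s ∈ Finset.Icc 1 m, max 0 (A - s * B) ≤ A ^ 2 / (2 * B) := by
  set k := ⌊A / B⌋₊ with hk
  have hkB : (k : ℝ) * B ≤ A := by
    have h1 : (k : ℝ) ≤ A / B := Nat.floor_le (div_nonneg hA hB.le)
    calc (k : ℝ) * B ≤ (A / B) * B := by nlinarith
    _ = A := by field_simp
  have hgt : ∀ s : ℕ, k < s → A - s * B ≤ 0 := by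
    intro s hs
    have h1 : A / B < (s : ℝ) := by
      have := Nat.lt_succ_floor (A / B)
      have h2 : (k : ℝ) + 1 ≤ (s : ℝ) := by exact_mod_cast hs
      push_cast at this ⊢
      linarith
    have : A < s * B := by
      have := (div_lt_iff₀ hB).mp h1
      linarith
    linarith
  have step1 : ∑ s ∈ Finset.Icc 1 m, max 0 (A - s * B)
      ≤ ∑ s ∈ Finset.Icc 1 m, (if s ≤ k then A - s * B else 0) := by
    apply Finset.sum_le_sum
    intro s _
    by_cases h : s ≤ k
    · simp only [h, if_true]
      have : (0:ℝ) ≤ A - s * B := by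
        have : (s : ℝ) * B ≤ k * B := by
          have : (s:ℝ) ≤ k := by exact_mod_cast h
          nlinarith
        linarith
      exact le_of_eq (max_eq_right this)
    · simp only [h, if_false]
      exact max_le le_rfl (hgt s (by omega))
  have step2 : ∑ s ∈ Finset.Icc 1 m, (if s ≤ k then A - s * B else 0)
      ≤ ∑ s ∈ Finset.Icc 1 k, (A - s * B) := by
    rw [← Finset.sum_filter]
    have hset : (Finset.Icc 1 m).filter (fun s => s ≤ k) = Finset.Icc 1 (min m k) := by
      ext s; simp [Finset.mem_filter, Finset.mem_Icc]; omega
    rw [hset]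
    apply Finset.sum_le_sum_of_subset_of_nonneg
    · apply Finset.Icc_subset_Icc_right; omega
    · intro s hs _
      have hsk : s ≤ k := (Finset.mem_Icc.mp hs).2
      have : (s : ℝ) * B ≤ k * B := by
        have : (s:ℝ) ≤ k := by exact_mod_cast hsk
        nlinarith
      linarith
  have step3 : ∑ s ∈ Finset.Icc 1 k, (A - s * B) = k * A - B * (k * (k + 1) / 2) := by
    rw [Finset.sum_sub_distrib, Finset.sum_const, Nat.card_Icc]
    have : ∑ x ∈ Finset.Icc 1 k, (x:ℝ) * B = (∑ x ∈ Finset.Icc 1 k, (x:ℝ)) * B := by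
      rw [Finset.sum_mul]
    rw [this, mbb_gauss]
    push_cast
    ring
  have step4 : (k:ℝ) * A - B * (k * (k + 1) / 2) ≤ A ^ 2 / (2 * B) := by
    rw [le_div_iff₀ (by positivity)]
    nlinarith [sq_nonneg (A - k * B), mul_pos hB hB, Nat.cast_nonneg (α := ℝ) k]
  linarith

lemma mbb_stepA (N q m : ℕ) (hm : m = N + q - 1) (hN : 1 ≤ N) (hq : 1 ≤ q) (a : ℕ → ℝ) :
    ∑ t ∈ Finset.range N, ∑ q' ∈ Finset.Icc 1 q, a (t + q') =
    ∑ s ∈ Finset.Icc 1 m,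
      (((Finset.Icc 1 q).filter (fun q' => q' ≤ s ∧ s < q' + N)).card : ℝ) * a s := by
  rw [Finset.sum_comm]
  have h1 : ∀ q' ∈ Finset.Icc 1 q, ∑ t ∈ Finset.range N, a (t + q')
      = ∑ s ∈ Finset.Icc 1 m, (if q' ≤ s ∧ s < q' + N then a s else 0) := by
    intro q' hq'
    have hq'1 : 1 ≤ q' ∧ q' ≤ q := Finset.mem_Icc.mp hq'
    have h2 : ∑ t ∈ Finset.range N, a (t + q') = ∑ s ∈ Finset.Ico q' (q' + N), a s := by
      rw [Finset.sum_Ico_eq_sum_range]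
      simp only [Nat.add_sub_cancel_left]
      exact Finset.sum_congr rfl (fun t _ => by rw [Nat.add_comm])
    rw [h2, ← Finset.sum_filter]
    have hset : (Finset.Icc 1 m).filter (fun s => q' ≤ s ∧ s < q' + N)
        = Finset.Ico q' (q' + N) := by
      ext s; simp only [Finset.mem_filter, Finset.mem_Icc, Finset.mem_Ico]; omega
    rw [hset]
  rw [Finset.sum_congr rfl h1, Finset.sum_comm]
  apply Finset.sum_congr rfl
  intro s _
  rw [← Finset.sum_filter, Finset.sum_const, nsmul_eq_mul]

lemma mbb_count_lb (N q m s : ℕ) (hm : m = N + q - 1) (hq : 1 ≤ q) (hqN : q ≤ N)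
    (hs1 : 1 ≤ s) (hsm : s ≤ m) :
    (letI c := ((Finset.Icc 1 q).filter (fun q' => q' ≤ s ∧ s < q' + N)).card
     q ≤ c ∨ s ≤ c ∨ m + 1 - s ≤ c) := by
  have hset : (Finset.Icc 1 q).filter (fun q' => q' ≤ s ∧ s < q' + N)
      = Finset.Icc (max 1 (s + 1 - N)) (min q s) := by
    ext q'; simp only [Finset.mem_filter, Finset.mem_Icc, le_max_iff, max_le_iff, le_min_iff]
    omega
  simp only [hset, Nat.card_Icc]
  omega

/-- Moving block bootstrap edge-effect bound: for `1 ≤ q` with `2q ≤ m`, the bootstrap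
expectation of the block average deviates from the full-sample average by at most
`(2q/m) · max_{1 ≤ t ≤ m} |a_t|`. -/
theorem mbb_edge_effect_bound
    (m q : ℕ) (hq : 1 ≤ q) (hqm : 2 * q ≤ m) (a : ℕ → ℝ)
    (hne : (Finset.Icc 1 m).Nonempty) :
    |(1 / ((q : ℝ) * ((m : ℝ) - q + 1)))
        * (∑ t ∈ Finset.range (m - q + 1), ∑ q' ∈ Finset.Icc 1 q, a (t + q'))
      - (1 / (m : ℝ)) * ∑ t ∈ Finset.Icc 1 m, a t|
      ≤ (2 * (q : ℝ) / m) * (Finset.Icc 1 m).sup' hne (fun t => |a t|) := by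
  set N := m - q + 1 with hN_def
  have hmN : m = N + q - 1 := by omega
  have hN1 : 1 ≤ N := by omega
  have hqN : q ≤ N := by omega
  have hNm : N ≤ m := by omega
  have hm1 : 1 ≤ m := by omega
  have hmR : (0:ℝ) < m := by exact_mod_cast hm1
  have hqR : (0:ℝ) < q := by exact_mod_cast hq
  have hNR : (0:ℝ) < N := by exact_mod_cast hN1
  have hcast : (m : ℝ) - q + 1 = (N : ℝ) := by
    have : (N : ℝ) = (m : ℝ) - q + 1 := by
      rw [hN_def]; push_cast [Nat.sub_add_cancel, Nat.cast_sub (by omega : q ≤ m)]; ring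
    linarith
  set M := (Finset.Icc 1 m).sup' hne (fun t => |a t|) with hM_def
  have hMs : ∀ s ∈ Finset.Icc 1 m, |a s| ≤ M := fun s hs => Finset.le_sup' (fun t => |a t|) hs
  have hM0 : 0 ≤ M := le_trans (abs_nonneg _) (hMs 1 (by simp [Finset.mem_Icc]; omega))
  set c : ℕ → ℕ :=
    fun s => ((Finset.Icc 1 q).filter (fun q' => q' ≤ s ∧ s < q' + N)).card with hc_def
  set e : ℕ → ℝ := fun s => (c s : ℝ) * (1 / ((q:ℝ) * N)) - 1 / m with he_def
  -- rewrite the difference as a single weighted sum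
  have hdiff : (1 / ((q : ℝ) * ((m : ℝ) - q + 1)))
        * (∑ t ∈ Finset.range N, ∑ q' ∈ Finset.Icc 1 q, a (t + q'))
      - (1 / (m : ℝ)) * ∑ t ∈ Finset.Icc 1 m, a t
      = ∑ s ∈ Finset.Icc 1 m, e s * a s := by
    rw [hcast, mbb_stepA N q m hmN hN1 hq a, Finset.mul_sum, Finset.mul_sum,
      ← Finset.sum_sub_distrib]
    apply Finset.sum_congr rfl
    intro s _
    simp only [he_def]
    ring
  -- total weight is 1
  have hsum_c : ∑ s ∈ Finset.Icc 1 m, (c s : ℝ) = (N : ℝ) * q := by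
    have := mbb_stepA N q m hmN hN1 hq (fun _ => 1)
    simp only [mul_one] at this
    rw [← this]
    simp [Finset.sum_const, Nat.card_Icc, mul_comm]
  have hsum_e : ∑ s ∈ Finset.Icc 1 m, e s = 0 := by
    simp only [he_def]
    rw [Finset.sum_sub_distrib, Finset.sum_const, Nat.card_Icc, ← Finset.sum_mul, hsum_c]
    field_simp
    simp [Nat.add_sub_cancel, nsmul_eq_mul, hmR.ne']
  -- bound |∑ e a| by (∑ |e|) * M
  have habs1 : |∑ s ∈ Finset.Icc 1 m, e s * a s| ≤ (∑ s ∈ Finset.Icc 1 m, |e s|) * M := by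
    calc |∑ s ∈ Finset.Icc 1 m, e s * a s| ≤ ∑ s ∈ Finset.Icc 1 m, |e s * a s| :=
          Finset.abs_sum_le_sum_abs _ _
      _ ≤ ∑ s ∈ Finset.Icc 1 m, |e s| * M := by
          apply Finset.sum_le_sum
          intro s hs
          rw [abs_mul]
          exact mul_le_mul_of_nonneg_left (hMs s hs) (abs_nonneg _)
      _ = (∑ s ∈ Finset.Icc 1 m, |e s|) * M := by rw [Finset.sum_mul]
  -- ∑ |e| = 2 ∑ max 0 (-e)
  have habs_id : ∀ x : ℝ, |x| = x + 2 * max 0 (-x) := by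
    intro x
    rcases le_total 0 x with h | h
    · rw [abs_of_nonneg h, max_eq_left (by linarith)]; ring
    · rw [abs_of_nonpos h, max_eq_right (by linarith)]; ring
  have hsum_abs : ∑ s ∈ Finset.Icc 1 m, |e s|
      = 2 * ∑ s ∈ Finset.Icc 1 m, max 0 (-(e s)) := by
    calc ∑ s ∈ Finset.Icc 1 m, |e s|
        = ∑ s ∈ Finset.Icc 1 m, (e s + 2 * max 0 (-(e s))) := by
          exact Finset.sum_congr rfl (fun s _ => habs_id (e s))
      _ = (∑ s ∈ Finset.Icc 1 m, e s) + 2 * ∑ s ∈ Finset.Icc 1 m, max 0 (-(e s)) := by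
          rw [Finset.sum_add_distrib, Finset.mul_sum]
      _ = 2 * ∑ s ∈ Finset.Icc 1 m, max 0 (-(e s)) := by rw [hsum_e]; ring
  -- pointwise bound on negative parts
  have hpt : ∀ s ∈ Finset.Icc 1 m, max 0 (-(e s))
      ≤ max 0 (1/(m:ℝ) - s * (1 / ((q:ℝ) * N)))
        + max 0 (1/(m:ℝ) - ((m:ℝ) + 1 - s) * (1 / ((q:ℝ) * N))) := by
    intro s hs
    obtain ⟨hs1, hsm⟩ := Finset.mem_Icc.mp hs
    have hne1 : -(e s) = 1/(m:ℝ) - (c s : ℝ) * (1 / ((q:ℝ) * N)) := by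
      simp only [he_def]; ring
    have hpos1 : (0:ℝ) ≤ max 0 (1/(m:ℝ) - s * (1 / ((q:ℝ) * N))) := le_max_left _ _
    have hpos2 : (0:ℝ) ≤ max 0 (1/(m:ℝ) - ((m:ℝ) + 1 - s) * (1 / ((q:ℝ) * N))) :=
      le_max_left _ _
    rcases mbb_count_lb N q m s hmN hq hqN hs1 hsm with h | h | h
    · -- c s ≥ q : the negative part vanishes
      have hcq : (q:ℝ) ≤ (c s : ℝ) := by exact_mod_cast h
      have : -(e s) ≤ 0 := by
        rw [hne1]
        have h1 : (q:ℝ) * (1 / ((q:ℝ) * N)) ≤ (c s : ℝ) * (1 / ((q:ℝ) * N)) := by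
          apply mul_le_mul_of_nonneg_right hcq
          positivity
        have h2 : (q:ℝ) * (1 / ((q:ℝ) * N)) = 1 / N := by field_simp
        have h3 : 1/(m:ℝ) ≤ 1/(N:ℝ) := by
          apply one_div_le_one_div_of_le hNR
          exact_mod_cast hNm
        linarith
      calc max 0 (-(e s)) = 0 := max_eq_left this
        _ ≤ _ := add_nonneg hpos1 hpos2
    · -- c s ≥ s
      have hcs : (s:ℝ) ≤ (c s : ℝ) := by exact_mod_cast h
      have h1 : -(e s) ≤ 1/(m:ℝ) - s * (1 / ((q:ℝ) * N)) := by
        rw [hne1]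
        have := mul_le_mul_of_nonneg_right hcs (by positivity : (0:ℝ) ≤ 1 / ((q:ℝ) * N))
        linarith
      calc max 0 (-(e s)) ≤ max 0 (1/(m:ℝ) - s * (1 / ((q:ℝ) * N))) :=
            max_le_max le_rfl h1
        _ ≤ _ := le_add_of_nonneg_right hpos2
    · -- c s ≥ m + 1 - s
      have hcs : (m:ℝ) + 1 - s ≤ (c s : ℝ) := by
        have h2 : ((m + 1 - s : ℕ) : ℝ) = (m:ℝ) + 1 - s := by
          push_cast [Nat.cast_sub (by omega : s ≤ m + 1)]; ring
        rw [← h2]; exact_mod_cast h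
      have h1 : -(e s) ≤ 1/(m:ℝ) - ((m:ℝ) + 1 - s) * (1 / ((q:ℝ) * N)) := by
        rw [hne1]
        have := mul_le_mul_of_nonneg_right hcs (by positivity : (0:ℝ) ≤ 1 / ((q:ℝ) * N))
        linarith
      calc max 0 (-(e s)) ≤ max 0 (1/(m:ℝ) - ((m:ℝ) + 1 - s) * (1 / ((q:ℝ) * N))) :=
            max_le_max le_rfl h1
        _ ≤ _ := le_add_of_nonneg_left hpos1
  -- reflection: the second sum equals the first
  have hrefl : ∑ s ∈ Finset.Icc 1 m, max 0 (1/(m:ℝ) - ((m:ℝ) + 1 - s) * (1 / ((q:ℝ) * N)))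
      = ∑ s ∈ Finset.Icc 1 m, max 0 (1/(m:ℝ) - s * (1 / ((q:ℝ) * N))) := by
    apply Finset.sum_nbij' (i := fun s => m + 1 - s) (j := fun s => m + 1 - s)
    · intro s hs; simp only [Finset.mem_Icc] at *; omega
    · intro s hs; simp only [Finset.mem_Icc] at *; omega
    · intro s hs; simp only [Finset.mem_Icc] at *; omega
    · intro s hs; simp only [Finset.mem_Icc] at *; omega
    · intro s hs
      simp only [Finset.mem_Icc] at hs
      have h2 : ((m + 1 - s : ℕ) : ℝ) = (m:ℝ) + 1 - s := by
        push_cast [Nat.cast_sub (by omega : s ≤ m + 1)]; ring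
      rw [h2]
  -- the TV bound
  have htv : ∑ s ∈ Finset.Icc 1 m, max 0 (1/(m:ℝ) - s * (1 / ((q:ℝ) * N)))
      ≤ (1/(m:ℝ))^2 / (2 * (1 / ((q:ℝ) * N))) :=
    mbb_tv_half m (1/(m:ℝ)) (1 / ((q:ℝ) * N)) (by positivity) (by positivity)
  have hval : (1/(m:ℝ))^2 / (2 * (1 / ((q:ℝ) * N))) = (q:ℝ) * N / (2 * m^2) := by
    field_simp
  -- assemble
  rw [hdiff]
  have hmaxsum : ∑ s ∈ Finset.Icc 1 m, max 0 (-(e s)) ≤ (q:ℝ) * N / m^2 := by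
    calc ∑ s ∈ Finset.Icc 1 m, max 0 (-(e s))
        ≤ ∑ s ∈ Finset.Icc 1 m, (max 0 (1/(m:ℝ) - s * (1 / ((q:ℝ) * N)))
            + max 0 (1/(m:ℝ) - ((m:ℝ) + 1 - s) * (1 / ((q:ℝ) * N)))) :=
          Finset.sum_le_sum hpt
      _ = ∑ s ∈ Finset.Icc 1 m, max 0 (1/(m:ℝ) - s * (1 / ((q:ℝ) * N)))
            + ∑ s ∈ Finset.Icc 1 m, max 0 (1/(m:ℝ) - ((m:ℝ) + 1 - s) * (1 / ((q:ℝ) * N))) :=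
          Finset.sum_add_distrib
      _ = 2 * ∑ s ∈ Finset.Icc 1 m, max 0 (1/(m:ℝ) - s * (1 / ((q:ℝ) * N))) := by
          rw [hrefl]; ring
      _ ≤ 2 * ((q:ℝ) * N / (2 * m^2)) := by
          rw [← hval]; linarith
      _ = (q:ℝ) * N / m^2 := by ring
  have hNmR : (N:ℝ) ≤ m := by exact_mod_cast hNm
  calc |∑ s ∈ Finset.Icc 1 m, e s * a s|
      ≤ (∑ s ∈ Finset.Icc 1 m, |e s|) * M := habs1
    _ = (2 * ∑ s ∈ Finset.Icc 1 m, max 0 (-(e s))) * M := by rw [hsum_abs]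
    _ ≤ (2 * ((q:ℝ) * N / m^2)) * M := by
        apply mul_le_mul_of_nonneg_right _ hM0
        linarith
    _ ≤ (2 * (q:ℝ) / m) * M := by
        apply mul_le_mul_of_nonneg_right _ hM0
        rw [show 2 * ((q:ℝ) * N / (m:ℝ)^2) = (2*(q:ℝ)*N)/(m:ℝ)^2 by ring,
          div_le_div_iff₀ (by positivity) hmR]
        nlinarith [mul_le_mul_of_nonneg_left hNmR (by positivity : (0:ℝ) ≤ 2 * (q:ℝ) * m)]
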